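/- Let L and C be finite-dimensional vector spaces with (C, L, ev, coev) a duality (adjoint pair), e.g. C = L*. If (L, λ, Λ) is a YB-Lie algebra, then C with γ and Υ defined by transposing λ and Λ through ev and coev is a YB-Lie coalgebra; in particular, antisymmetry of Λ implies γ ∘ Υ = −Υ. -/

import Mathlib

open TensorProduct

set_option maxHeartbeats 1000000

variable {k : Type*} [Field k] {L : Type*} [AddCommGroup L] [Module k L]

/-- The operator `c ⊗ 1` acting on the first two factors of `L ⊗ (L ⊗ L)`. -/
noncomputable def firstTwo (c : L ⊗[k] L →ₗ[k] L ⊗[k] L) :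
    L ⊗[k] (L ⊗[k] L) →ₗ[k] L ⊗[k] (L ⊗[k] L) :=
  (TensorProduct.assoc k L L L).toLinearMap ∘ₗ
    (TensorProduct.map c LinearMap.id) ∘ₗ (TensorProduct.assoc k L L L).symm.toLinearMap

/-- The operator `1 ⊗ c` acting on the last two factors of `L ⊗ (L ⊗ L)`. -/
noncomputable def lastTwo (c : L ⊗[k] L →ₗ[k] L ⊗[k] L) :
    L ⊗[k] (L ⊗[k] L) →ₗ[k] L ⊗[k] (L ⊗[k] L) :=
  LinearMap.lTensor L c

/-- `t_c = (c ⊗ 1) ∘ (1 ⊗ c)` on `L ⊗ (L ⊗ L)`. -/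
noncomputable def tOp (c : L ⊗[k] L →ₗ[k] L ⊗[k] L) :
    L ⊗[k] (L ⊗[k] L) →ₗ[k] L ⊗[k] (L ⊗[k] L) :=
  firstTwo c ∘ₗ lastTwo c

/-- `w_c = (1 ⊗ c) ∘ (c ⊗ 1)` on `L ⊗ (L ⊗ L)`. -/
noncomputable def wOp (c : L ⊗[k] L →ₗ[k] L ⊗[k] L) :
    L ⊗[k] (L ⊗[k] L) →ₗ[k] L ⊗[k] (L ⊗[k] L) :=
  lastTwo c ∘ₗ firstTwo c

/-- `Λ ⊗ 1 : L ⊗ (L ⊗ L) → L ⊗ L`, applying the bracket to the first two factors. -/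
noncomputable def brFirst (Lam : L ⊗[k] L →ₗ[k] L) :
    L ⊗[k] (L ⊗[k] L) →ₗ[k] L ⊗[k] L :=
  (TensorProduct.map Lam LinearMap.id) ∘ₗ (TensorProduct.assoc k L L L).symm.toLinearMap


open Module

section AuxGlue

variable {k : Type*} [Field k]
variable {M N P Q : Type*} [AddCommGroup M] [Module k M] [AddCommGroup N] [Module k N]
  [AddCommGroup P] [Module k P] [AddCommGroup Q] [Module k Q]

theorem aux_cancel_left (e : M ≃ₗ[k] N) (f g : P →ₗ[k] M)
    (h : e.toLinearMap ∘ₗ f = e.toLinearMap ∘ₗ g) : f = g := by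
  ext x; exact e.injective (LinearMap.congr_fun h x)

theorem aux_cancel_right (e : M ≃ₗ[k] N) (f g : N →ₗ[k] P)
    (h : f ∘ₗ e.toLinearMap = g ∘ₗ e.toLinearMap) : f = g := by
  ext x
  have := LinearMap.congr_fun h (e.symm x)
  simpa using this

theorem aux_symm_comp (e : M ≃ₗ[k] N) :
    e.symm.toLinearMap ∘ₗ e.toLinearMap = LinearMap.id := by
  ext x; simp

theorem aux_comp_symm (e : M ≃ₗ[k] N) :
    e.toLinearMap ∘ₗ e.symm.toLinearMap = LinearMap.id := by
  ext x; simp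

theorem aux_dualMap_add (f g : M →ₗ[k] N) :
    (f + g).dualMap = f.dualMap + g.dualMap := by
  ext φ x; simp

theorem aux_dualMap_zero : ((0 : M →ₗ[k] N)).dualMap = 0 := by
  ext φ x; simp

/-- Composition of intertwining relations. -/
theorem aux_comp_intw {M₁ M₂ M₃ N₁ N₂ N₃ : Type*}
    [AddCommGroup M₁] [Module k M₁] [AddCommGroup M₂] [Module k M₂]
    [AddCommGroup M₃] [Module k M₃]
    [AddCommGroup N₁] [Module k N₁] [AddCommGroup N₂] [Module k N₂]
    [AddCommGroup N₃] [Module k N₃]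
    (e₁ : M₁ ≃ₗ[k] Dual k N₁) (e₂ : M₂ ≃ₗ[k] Dual k N₂) (e₃ : M₃ ≃ₗ[k] Dual k N₃)
    {a : M₁ →ₗ[k] M₂} {b : M₂ →ₗ[k] M₃} {f : N₂ →ₗ[k] N₁} {g : N₃ →ₗ[k] N₂}
    (ha : e₂.toLinearMap ∘ₗ a = f.dualMap ∘ₗ e₁.toLinearMap)
    (hb : e₃.toLinearMap ∘ₗ b = g.dualMap ∘ₗ e₂.toLinearMap) :
    e₃.toLinearMap ∘ₗ (b ∘ₗ a) = (f ∘ₗ g).dualMap ∘ₗ e₁.toLinearMap := by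
  rw [← LinearMap.comp_assoc, hb, LinearMap.comp_assoc, ha,
    ← LinearMap.comp_assoc, LinearMap.dualMap_comp_dualMap]

theorem aux_ext_threefold' {g h : M ⊗[k] (N ⊗[k] P) →ₗ[k] Q}
    (H : ∀ x y z, g (x ⊗ₜ (y ⊗ₜ z)) = h (x ⊗ₜ (y ⊗ₜ z))) : g = h := by
  apply TensorProduct.ext'
  intro x t
  induction t with
  | zero => simp [tmul_zero]
  | tmul y z => exact H x y z
  | add a b iha ihb => rw [tmul_add, map_add, map_add, iha, ihb]

end AuxGlue

section AuxIntw
variable {k : Type*} [Field k] {L : Type*} [AddCommGroup L] [Module k L] [FiniteDimensional k L]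

noncomputable def auxE2 : Dual k L ⊗[k] Dual k L ≃ₗ[k] Dual k (L ⊗[k] L) :=
  TensorProduct.dualDistribEquiv k L L

@[simp] theorem auxE2_apply (x : Dual k L ⊗[k] Dual k L) :
    auxE2 x = TensorProduct.dualDistrib k L L x := rfl

noncomputable def auxE3 : Dual k L ⊗[k] (Dual k L ⊗[k] Dual k L) ≃ₗ[k] Dual k (L ⊗[k] (L ⊗[k] L)) :=
  (TensorProduct.congr (LinearEquiv.refl k (Dual k L)) auxE2) ≪≫ₗ
    TensorProduct.dualDistribEquiv k L (L ⊗[k] L)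

noncomputable def auxE3' : (Dual k L ⊗[k] Dual k L) ⊗[k] Dual k L ≃ₗ[k] Dual k ((L ⊗[k] L) ⊗[k] L) :=
  (TensorProduct.congr (auxE2 (k := k) (L := L)) (LinearEquiv.refl k (Dual k L))) ≪≫ₗ
    TensorProduct.dualDistribEquiv k (L ⊗[k] L) L

theorem intw_lastTwo (g : Dual k L ⊗[k] Dual k L →ₗ[k] Dual k L ⊗[k] Dual k L)
    (f : L ⊗[k] L →ₗ[k] L ⊗[k] L)
    (h : ∀ t, auxE2 (g t) = f.dualMap (auxE2 t)) :
    (auxE3 (k := k) (L := L)).toLinearMap ∘ₗ LinearMap.lTensor (Dual k L) g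
      = (LinearMap.lTensor L f).dualMap ∘ₗ (auxE3 (k := k) (L := L)).toLinearMap := by
  apply TensorProduct.ext'
  intro φ t
  apply TensorProduct.ext'
  intro x s
  simp only [LinearMap.coe_comp, Function.comp_apply, LinearEquiv.coe_coe,
    LinearMap.lTensor_tmul, auxE3, LinearEquiv.trans_apply, TensorProduct.congr_tmul,
    LinearEquiv.refl_apply, h, LinearMap.dualMap_apply]
  simp

theorem intw_mapFirst (g : Dual k L ⊗[k] Dual k L →ₗ[k] Dual k L ⊗[k] Dual k L)
    (f : L ⊗[k] L →ₗ[k] L ⊗[k] L)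
    (h : ∀ t, auxE2 (g t) = f.dualMap (auxE2 t)) :
    (auxE3' (k := k) (L := L)).toLinearMap ∘ₗ TensorProduct.map g LinearMap.id
      = (TensorProduct.map f LinearMap.id).dualMap ∘ₗ (auxE3' (k := k) (L := L)).toLinearMap := by
  apply TensorProduct.ext'
  intro u χ
  apply TensorProduct.ext'
  intro s z
  simp only [LinearMap.coe_comp, Function.comp_apply, LinearEquiv.coe_coe,
    TensorProduct.map_tmul, auxE3', LinearEquiv.trans_apply, TensorProduct.congr_tmul,
    LinearEquiv.refl_apply, h, LinearMap.dualMap_apply, LinearMap.id_coe, id_eq]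
  simp

theorem intw_assoc :
    (auxE3 (k := k) (L := L)).toLinearMap ∘ₗ
        (TensorProduct.assoc k (Dual k L) (Dual k L) (Dual k L)).toLinearMap
      = ((TensorProduct.assoc k L L L).symm.toLinearMap).dualMap ∘ₗ
        (auxE3' (k := k) (L := L)).toLinearMap := by
  apply TensorProduct.ext_threefold
  intro φ ψ χ
  apply aux_ext_threefold'
  intro x y z
  simp only [LinearMap.coe_comp, Function.comp_apply, LinearEquiv.coe_coe, assoc_tmul,
    auxE3, auxE3', LinearEquiv.trans_apply, TensorProduct.congr_tmul, LinearEquiv.refl_apply,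
    LinearMap.dualMap_apply, assoc_symm_tmul]
  simp [mul_assoc]

theorem intw_firstTwo (g : Dual k L ⊗[k] Dual k L →ₗ[k] Dual k L ⊗[k] Dual k L)
    (f : L ⊗[k] L →ₗ[k] L ⊗[k] L)
    (h : ∀ t, auxE2 (g t) = f.dualMap (auxE2 t)) :
    (auxE3 (k := k) (L := L)).toLinearMap ∘ₗ firstTwo g
      = (firstTwo f).dualMap ∘ₗ (auxE3 (k := k) (L := L)).toLinearMap := by
  set E3 := (auxE3 (k := k) (L := L)).toLinearMap with hE3
  set E3' := (auxE3' (k := k) (L := L)).toLinearMap with hE3'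
  set A := (TensorProduct.assoc k (Dual k L) (Dual k L) (Dual k L)).toLinearMap with hA
  set As := (TensorProduct.assoc k L L L).symm.toLinearMap with hAs
  have h1 : firstTwo g ∘ₗ A = A ∘ₗ TensorProduct.map g LinearMap.id := by
    rw [hA]
    apply TensorProduct.ext_threefold
    intro a b c
    simp [firstTwo]
  have h2 : As ∘ₗ firstTwo f = TensorProduct.map f LinearMap.id ∘ₗ As := by
    rw [hAs]
    apply aux_ext_threefold'
    intro a b c
    simp [firstTwo]
  have hia : E3 ∘ₗ A = As.dualMap ∘ₗ E3' := intw_assoc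
  have him : E3' ∘ₗ TensorProduct.map g LinearMap.id
      = (TensorProduct.map f LinearMap.id).dualMap ∘ₗ E3' := intw_mapFirst g f h
  have key : (E3 ∘ₗ firstTwo g) ∘ₗ A = ((firstTwo f).dualMap ∘ₗ E3) ∘ₗ A := by
    calc (E3 ∘ₗ firstTwo g) ∘ₗ A
        = E3 ∘ₗ (firstTwo g ∘ₗ A) := LinearMap.comp_assoc _ _ _
      _ = E3 ∘ₗ (A ∘ₗ TensorProduct.map g LinearMap.id) := by rw [h1]
      _ = (E3 ∘ₗ A) ∘ₗ TensorProduct.map g LinearMap.id := (LinearMap.comp_assoc _ _ _).symm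
      _ = (As.dualMap ∘ₗ E3') ∘ₗ TensorProduct.map g LinearMap.id := by rw [hia]
      _ = As.dualMap ∘ₗ (E3' ∘ₗ TensorProduct.map g LinearMap.id) := LinearMap.comp_assoc _ _ _
      _ = As.dualMap ∘ₗ ((TensorProduct.map f LinearMap.id).dualMap ∘ₗ E3') := by rw [him]
      _ = (As.dualMap ∘ₗ (TensorProduct.map f LinearMap.id).dualMap) ∘ₗ E3' :=
          (LinearMap.comp_assoc _ _ _).symm
      _ = ((TensorProduct.map f LinearMap.id) ∘ₗ As).dualMap ∘ₗ E3' := by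
          rw [LinearMap.dualMap_comp_dualMap]
      _ = (As ∘ₗ firstTwo f).dualMap ∘ₗ E3' := by rw [← h2]
      _ = ((firstTwo f).dualMap ∘ₗ As.dualMap) ∘ₗ E3' := by
          rw [LinearMap.dualMap_comp_dualMap]
      _ = (firstTwo f).dualMap ∘ₗ (As.dualMap ∘ₗ E3') := LinearMap.comp_assoc _ _ _
      _ = (firstTwo f).dualMap ∘ₗ (E3 ∘ₗ A) := by rw [← hia]
      _ = ((firstTwo f).dualMap ∘ₗ E3) ∘ₗ A := (LinearMap.comp_assoc _ _ _).symm
  rw [hA] at key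
  exact (LinearMap.cancel_right
    (TensorProduct.assoc k (Dual k L) (Dual k L) (Dual k L)).surjective).mp key


theorem intw_lTensorUps (U : Dual k L →ₗ[k] Dual k L ⊗[k] Dual k L) (B : L ⊗[k] L →ₗ[k] L)
    (h : ∀ φ, auxE2 (U φ) = B.dualMap φ) :
    (auxE3 (k := k) (L := L)).toLinearMap ∘ₗ LinearMap.lTensor (Dual k L) U
      = (LinearMap.lTensor L B).dualMap ∘ₗ (auxE2 (k := k) (L := L)).toLinearMap := by
  apply TensorProduct.ext'
  intro φ ψ
  apply TensorProduct.ext'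
  intro x t
  simp only [LinearMap.coe_comp, Function.comp_apply, LinearEquiv.coe_coe,
    LinearMap.lTensor_tmul, auxE3, LinearEquiv.trans_apply, TensorProduct.congr_tmul,
    LinearEquiv.refl_apply, h, LinearMap.dualMap_apply]
  simp

theorem intw_mapUpsFirst (U : Dual k L →ₗ[k] Dual k L ⊗[k] Dual k L) (B : L ⊗[k] L →ₗ[k] L)
    (h : ∀ φ, auxE2 (U φ) = B.dualMap φ) :
    (auxE3' (k := k) (L := L)).toLinearMap ∘ₗ TensorProduct.map U LinearMap.id
      = (TensorProduct.map B LinearMap.id).dualMap ∘ₗ (auxE2 (k := k) (L := L)).toLinearMap := by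
  apply TensorProduct.ext'
  intro φ ψ
  apply TensorProduct.ext'
  intro s z
  simp only [LinearMap.coe_comp, Function.comp_apply, LinearEquiv.coe_coe,
    TensorProduct.map_tmul, auxE3', LinearEquiv.trans_apply, TensorProduct.congr_tmul,
    LinearEquiv.refl_apply, h, LinearMap.dualMap_apply, LinearMap.id_coe, id_eq]
  simp

end AuxIntw


open Module in
/-- Let `L` be a finite-dimensional YB-Lie algebra `(L, λ, Λ)` over `k` and
`C = L*` its dual (which, with the canonical evaluation and coevaluation, forms
an adjoint pair with `L`).  Then `C`, with `γ` and `Υ` obtained by transposing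
`λ` and `Λ` through the duality, is a YB-Lie coalgebra: `γ` is a self-invertible
Yang–Baxter operator, `Υ + γ ∘ Υ = 0` (in particular antisymmetry of `Λ` gives
`γ ∘ Υ = −Υ`), the co-Jacobi identity holds, and `γ` and `Υ` are compatible. -/
theorem stmt10 [FiniteDimensional k L]
    (lam : L ⊗[k] L →ₗ[k] L ⊗[k] L) (Lam : L ⊗[k] L →ₗ[k] L)
    (hinv : lam ∘ₗ lam = LinearMap.id)
    (hYB : firstTwo (k := k) lam ∘ₗ lastTwo lam ∘ₗ firstTwo lam
        = lastTwo lam ∘ₗ firstTwo lam ∘ₗ lastTwo lam)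
    (hAnti : Lam ∘ₗ (LinearMap.id + lam) = 0)
    (hJac : Lam ∘ₗ LinearMap.lTensor L Lam ∘ₗ (LinearMap.id + tOp lam + wOp lam) = 0)
    (hComp : lam ∘ₗ brFirst Lam = LinearMap.lTensor L Lam ∘ₗ tOp lam) :
    letI C := Module.Dual k L
    letI γ : C ⊗[k] C →ₗ[k] C ⊗[k] C :=
      (TensorProduct.dualDistribEquiv k L L).symm.toLinearMap ∘ₗ lam.dualMap ∘ₗ
        (TensorProduct.dualDistribEquiv k L L).toLinearMap
    letI Υ : C →ₗ[k] C ⊗[k] C :=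
      (TensorProduct.dualDistribEquiv k L L).symm.toLinearMap ∘ₗ Lam.dualMap
    -- γ is a self-invertible Yang–Baxter operator:
    (γ ∘ₗ γ = LinearMap.id) ∧
    (firstTwo (k := k) γ ∘ₗ lastTwo γ ∘ₗ firstTwo γ
      = lastTwo γ ∘ₗ firstTwo γ ∘ₗ lastTwo γ) ∧
    -- antisymmetry: Υ + γ ∘ Υ = 0 :
    (Υ + γ ∘ₗ Υ = 0) ∧
    -- co-Jacobi identity:
    ((LinearMap.id + wOp γ + tOp γ) ∘ₗ LinearMap.lTensor C Υ ∘ₗ Υ = 0) ∧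
    -- compatibility of γ and Υ:
    ((TensorProduct.assoc k C C C).toLinearMap ∘ₗ TensorProduct.map Υ LinearMap.id ∘ₗ γ
      = wOp γ ∘ₗ LinearMap.lTensor C Υ) := by
  set C := Dual k L with hC
  set γ : C ⊗[k] C →ₗ[k] C ⊗[k] C :=
      (TensorProduct.dualDistribEquiv k L L).symm.toLinearMap ∘ₗ lam.dualMap ∘ₗ
        (TensorProduct.dualDistribEquiv k L L).toLinearMap with hγdef
  set Υ : C →ₗ[k] C ⊗[k] C :=
      (TensorProduct.dualDistribEquiv k L L).symm.toLinearMap ∘ₗ Lam.dualMap with hΥdef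
  -- pointwise intertwining facts
  have hγ : ∀ t, auxE2 (γ t) = lam.dualMap (auxE2 t) := by
    intro t
    exact (TensorProduct.dualDistribEquiv k L L).apply_symm_apply _
  have hΥ : ∀ φ, auxE2 (Υ φ) = Lam.dualMap φ := by
    intro φ
    exact (TensorProduct.dualDistribEquiv k L L).apply_symm_apply _
  set E2 := (auxE2 (k := k) (L := L)).toLinearMap with hE2
  set E3 := (auxE3 (k := k) (L := L)).toLinearMap with hE3
  set E3' := (auxE3' (k := k) (L := L)).toLinearMap with hE3'
  have cγ : E2 ∘ₗ γ = lam.dualMap ∘ₗ E2 := by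
    apply LinearMap.ext; intro t; exact hγ t
  have cΥ : E2 ∘ₗ Υ = Lam.dualMap := by
    apply LinearMap.ext; intro φ; exact hΥ φ
  have cF : E3 ∘ₗ firstTwo γ = (firstTwo lam).dualMap ∘ₗ E3 := intw_firstTwo γ lam hγ
  have cL : E3 ∘ₗ lastTwo γ = (lastTwo lam).dualMap ∘ₗ E3 := intw_lastTwo γ lam hγ
  have clT : E3 ∘ₗ LinearMap.lTensor C Υ = (LinearMap.lTensor L Lam).dualMap ∘ₗ E2 :=
    intw_lTensorUps Υ Lam hΥ
  have cmU : E3' ∘ₗ TensorProduct.map Υ LinearMap.id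
      = (TensorProduct.map Lam LinearMap.id).dualMap ∘ₗ E2 := intw_mapUpsFirst Υ Lam hΥ
  have cA : E3 ∘ₗ (TensorProduct.assoc k C C C).toLinearMap
      = ((TensorProduct.assoc k L L L).symm.toLinearMap).dualMap ∘ₗ E3' := intw_assoc
  -- composition helper for endomorphisms of the triple tensor
  have hcomp : ∀ (a b : C ⊗[k] (C ⊗[k] C) →ₗ[k] C ⊗[k] (C ⊗[k] C))
      (f g : L ⊗[k] (L ⊗[k] L) →ₗ[k] L ⊗[k] (L ⊗[k] L)),
      (E3 ∘ₗ a = f.dualMap ∘ₗ E3) → (E3 ∘ₗ b = g.dualMap ∘ₗ E3) →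
      E3 ∘ₗ (a ∘ₗ b) = (g ∘ₗ f).dualMap ∘ₗ E3 := by
    intro a b f g ha hb
    rw [← LinearMap.comp_assoc, ha, LinearMap.comp_assoc, hb, ← LinearMap.comp_assoc,
      LinearMap.dualMap_comp_dualMap]
  have cw : E3 ∘ₗ wOp γ = (tOp lam).dualMap ∘ₗ E3 :=
    hcomp (lastTwo γ) (firstTwo γ) (lastTwo lam) (firstTwo lam) cL cF
  have ct : E3 ∘ₗ tOp γ = (wOp lam).dualMap ∘ₗ E3 :=
    hcomp (firstTwo γ) (lastTwo γ) (firstTwo lam) (lastTwo lam) cF cL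
  refine ⟨?_, ?_, ?_, ?_, ?_⟩
  · -- γ ∘ γ = id
    have key : E2 ∘ₗ (γ ∘ₗ γ) = E2 ∘ₗ LinearMap.id := by
      rw [LinearMap.comp_id, ← LinearMap.comp_assoc, cγ, LinearMap.comp_assoc, cγ,
        ← LinearMap.comp_assoc, LinearMap.dualMap_comp_dualMap, hinv, LinearMap.dualMap_id,
        LinearMap.id_comp]
    exact (LinearMap.cancel_left (auxE2 (k := k) (L := L)).injective).mp key
  · -- Yang–Baxter for γ
    have cLF : E3 ∘ₗ (lastTwo γ ∘ₗ firstTwo γ)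
        = (firstTwo lam ∘ₗ lastTwo lam).dualMap ∘ₗ E3 :=
      hcomp (lastTwo γ) (firstTwo γ) (lastTwo lam) (firstTwo lam) cL cF
    have cFL : E3 ∘ₗ (firstTwo γ ∘ₗ lastTwo γ)
        = (lastTwo lam ∘ₗ firstTwo lam).dualMap ∘ₗ E3 :=
      hcomp (firstTwo γ) (lastTwo γ) (firstTwo lam) (lastTwo lam) cF cL
    have lhs : E3 ∘ₗ (firstTwo γ ∘ₗ (lastTwo γ ∘ₗ firstTwo γ))
        = ((firstTwo lam ∘ₗ lastTwo lam) ∘ₗ firstTwo lam).dualMap ∘ₗ E3 :=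
      hcomp (firstTwo γ) (lastTwo γ ∘ₗ firstTwo γ) (firstTwo lam)
        (firstTwo lam ∘ₗ lastTwo lam) cF cLF
    have rhs : E3 ∘ₗ (lastTwo γ ∘ₗ (firstTwo γ ∘ₗ lastTwo γ))
        = ((lastTwo lam ∘ₗ firstTwo lam) ∘ₗ lastTwo lam).dualMap ∘ₗ E3 :=
      hcomp (lastTwo γ) (firstTwo γ ∘ₗ lastTwo γ) (lastTwo lam)
        (lastTwo lam ∘ₗ firstTwo lam) cL cFL
    have key : E3 ∘ₗ (firstTwo γ ∘ₗ (lastTwo γ ∘ₗ firstTwo γ))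
        = E3 ∘ₗ (lastTwo γ ∘ₗ (firstTwo γ ∘ₗ lastTwo γ)) := by
      rw [lhs, rhs, LinearMap.comp_assoc (firstTwo lam) (lastTwo lam) (firstTwo lam),
        LinearMap.comp_assoc (lastTwo lam) (firstTwo lam) (lastTwo lam), hYB]
    exact (LinearMap.cancel_left (auxE3 (k := k) (L := L)).injective).mp key
  · -- antisymmetry
    have h0 : Lam + Lam ∘ₗ lam = 0 := by
      have := hAnti
      rwa [LinearMap.comp_add, LinearMap.comp_id] at this
    have key : E2 ∘ₗ (Υ + γ ∘ₗ Υ) = E2 ∘ₗ 0 := by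
      rw [LinearMap.comp_zero, LinearMap.comp_add, cΥ, ← LinearMap.comp_assoc, cγ,
        LinearMap.comp_assoc, cΥ, LinearMap.dualMap_comp_dualMap, ← aux_dualMap_add, h0,
        aux_dualMap_zero]
    exact (LinearMap.cancel_left (auxE2 (k := k) (L := L)).injective).mp key
  · -- co-Jacobi
    have cid : E3 ∘ₗ (LinearMap.id : C ⊗[k] (C ⊗[k] C) →ₗ[k] C ⊗[k] (C ⊗[k] C))
        = (LinearMap.id : L ⊗[k] (L ⊗[k] L) →ₗ[k] L ⊗[k] (L ⊗[k] L)).dualMap ∘ₗ E3 := by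
      rw [LinearMap.comp_id, LinearMap.dualMap_id, LinearMap.id_comp]
    have cS : E3 ∘ₗ (LinearMap.id + wOp γ + tOp γ)
        = (LinearMap.id + tOp lam + wOp lam).dualMap ∘ₗ E3 := by
      rw [LinearMap.comp_add, LinearMap.comp_add, cid, cw, ct, aux_dualMap_add,
        aux_dualMap_add, LinearMap.add_comp, LinearMap.add_comp]
    have cTail : E3 ∘ₗ (LinearMap.lTensor C Υ ∘ₗ Υ)
        = (Lam ∘ₗ LinearMap.lTensor L Lam).dualMap := by
      rw [← LinearMap.comp_assoc, clT, LinearMap.comp_assoc, cΥ,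
        LinearMap.dualMap_comp_dualMap]
    have hJ : (Lam ∘ₗ LinearMap.lTensor L Lam) ∘ₗ (LinearMap.id + tOp lam + wOp lam) = 0 := by
      rw [LinearMap.comp_assoc]; exact hJac
    have key : E3 ∘ₗ ((LinearMap.id + wOp γ + tOp γ) ∘ₗ (LinearMap.lTensor C Υ ∘ₗ Υ))
        = E3 ∘ₗ 0 := by
      rw [LinearMap.comp_zero, ← LinearMap.comp_assoc, cS, LinearMap.comp_assoc, cTail,
        LinearMap.dualMap_comp_dualMap, hJ, aux_dualMap_zero]
    exact (LinearMap.cancel_left (auxE3 (k := k) (L := L)).injective).mp key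
  · -- compatibility
    have lhs : E3 ∘ₗ ((TensorProduct.assoc k C C C).toLinearMap ∘ₗ
        (TensorProduct.map Υ LinearMap.id ∘ₗ γ))
        = (lam ∘ₗ brFirst Lam).dualMap ∘ₗ E2 := by
      set A := (TensorProduct.assoc k C C C).toLinearMap with hA
      set As := (TensorProduct.assoc k L L L).symm.toLinearMap with hAs
      set mU := TensorProduct.map Υ (LinearMap.id : C →ₗ[k] C) with hmU
      set mL := TensorProduct.map Lam (LinearMap.id : L →ₗ[k] L) with hmL
      calc E3 ∘ₗ (A ∘ₗ (mU ∘ₗ γ))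
          = (E3 ∘ₗ A) ∘ₗ (mU ∘ₗ γ) := (LinearMap.comp_assoc _ _ _).symm
        _ = (As.dualMap ∘ₗ E3') ∘ₗ (mU ∘ₗ γ) := by rw [cA]
        _ = As.dualMap ∘ₗ (E3' ∘ₗ (mU ∘ₗ γ)) := LinearMap.comp_assoc _ _ _
        _ = As.dualMap ∘ₗ ((E3' ∘ₗ mU) ∘ₗ γ) :=
            congrArg (fun x => As.dualMap ∘ₗ x) (LinearMap.comp_assoc γ mU E3').symm
        _ = As.dualMap ∘ₗ ((mL.dualMap ∘ₗ E2) ∘ₗ γ) := by rw [cmU]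
        _ = As.dualMap ∘ₗ (mL.dualMap ∘ₗ (E2 ∘ₗ γ)) :=
            congrArg (fun x => As.dualMap ∘ₗ x) (LinearMap.comp_assoc γ E2 mL.dualMap)
        _ = As.dualMap ∘ₗ (mL.dualMap ∘ₗ (lam.dualMap ∘ₗ E2)) := by rw [cγ]
        _ = As.dualMap ∘ₗ ((mL.dualMap ∘ₗ lam.dualMap) ∘ₗ E2) :=
            congrArg (fun x => As.dualMap ∘ₗ x)
              (LinearMap.comp_assoc E2 lam.dualMap mL.dualMap).symm
        _ = As.dualMap ∘ₗ ((lam ∘ₗ mL).dualMap ∘ₗ E2) := by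
            rw [LinearMap.dualMap_comp_dualMap]
        _ = (As.dualMap ∘ₗ (lam ∘ₗ mL).dualMap) ∘ₗ E2 := (LinearMap.comp_assoc _ _ _).symm
        _ = ((lam ∘ₗ mL) ∘ₗ As).dualMap ∘ₗ E2 := by rw [LinearMap.dualMap_comp_dualMap]
        _ = (lam ∘ₗ brFirst Lam).dualMap ∘ₗ E2 := by
            rw [LinearMap.comp_assoc As mL lam]; rfl
    have rhs : E3 ∘ₗ (wOp γ ∘ₗ LinearMap.lTensor C Υ)
        = (LinearMap.lTensor L Lam ∘ₗ tOp lam).dualMap ∘ₗ E2 := by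
      rw [← LinearMap.comp_assoc, cw, LinearMap.comp_assoc, clT, ← LinearMap.comp_assoc,
        LinearMap.dualMap_comp_dualMap]
    have key : E3 ∘ₗ ((TensorProduct.assoc k C C C).toLinearMap ∘ₗ
        (TensorProduct.map Υ LinearMap.id ∘ₗ γ))
        = E3 ∘ₗ (wOp γ ∘ₗ LinearMap.lTensor C Υ) := by
      rw [lhs, rhs, hComp]
    exact (LinearMap.cancel_left (auxE3 (k := k) (L := L)).injective).mp key
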